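/- Let (x*, y*) satisfy A_ff x* + A_fs y* = b1 and A_sf x* + A_ss y* = b2, and let (x_p*, y_p*) ∈ X × Y satisfy the projected equations Π_X(A_ff x_p* + A_fs y_p* − b1) = 0 and Π_Y(A_sf x_p* + A_ss y_p* − b2) = 0. Suppose U_Yᵀ A_ss U_Y is invertible and set c5 := U_Y (U_Yᵀ A_ss U_Y)^{-1} U_Yᵀ. Then the approximation-error identity y_p* − y* = (I − c5 A_ss)(Π_Y y* − y*) − c5 A_sf (x_p* − x*) holds. -/
import Mathlib


open Matrix MeasureTheory Finset
open scoped BigOperators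

noncomputable section
namespace TTSA

abbrev E (n : ℕ) : Type := EuclideanSpace ℝ (Fin n)

def mv {k l : ℕ} (M : Matrix (Fin k) (Fin l) ℝ) (x : E l) : E k :=
  Matrix.toEuclideanLin M x

def specNorm {k l : ℕ} (M : Matrix (Fin k) (Fin l) ℝ) : ℝ :=
  ‖LinearMap.toContinuousLinearMap (Matrix.toEuclideanLin M)‖

def sigmaMin {k : ℕ} (M : Matrix (Fin k) (Fin k) ℝ) : ℝ :=
  sInf ((fun v : E k => ‖mv M v‖) '' {v | ‖v‖ = 1})

def resolvent {k l : ℕ} (U : Matrix (Fin k) (Fin l) ℝ) (A : Matrix (Fin k) (Fin k) ℝ) :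
    Matrix (Fin k) (Fin k) ℝ :=
  U * (Uᵀ * A * U)⁻¹ * Uᵀ

lemma mv_mul {k l p : ℕ} (A : Matrix (Fin k) (Fin l) ℝ) (B : Matrix (Fin l) (Fin p) ℝ)
    (x : E p) : mv (A * B) x = mv A (mv B x) := by
  simp [mv, Matrix.toEuclideanLin_apply, Matrix.mulVec_mulVec]

lemma mv_one {k : ℕ} (x : E k) : mv (1 : Matrix (Fin k) (Fin k) ℝ) x = x := by
  simp [mv, Matrix.toEuclideanLin_apply, Matrix.one_mulVec]

lemma mv_sub {k l : ℕ} (M : Matrix (Fin k) (Fin l) ℝ) (x y : E l) :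
    mv M (x - y) = mv M x - mv M y := by simp [mv]

lemma mv_add {k l : ℕ} (M : Matrix (Fin k) (Fin l) ℝ) (x y : E l) :
    mv M (x + y) = mv M x + mv M y := by simp [mv]

lemma mv_matsub {k l : ℕ} (M N : Matrix (Fin k) (Fin l) ℝ) (x : E l) :
    mv (M - N) x = mv M x - mv N x := by simp [mv]

lemma mv_zero {k l : ℕ} (M : Matrix (Fin k) (Fin l) ℝ) :
    mv M (0 : E l) = 0 := by simp [mv]

/-- approximation-error identity for the slow component:
`y_p* - y* = (I - c5 A_ss)(Π_Y y* - y*) - c5 A_sf (x_p* - x*)`,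
with `c5 = resolvent U_Y A_ss`. -/
theorem slow_approximation_identity {n m d r : ℕ}
    (Aff : Matrix (Fin n) (Fin n) ℝ) (Afs : Matrix (Fin n) (Fin m) ℝ)
    (Asf : Matrix (Fin m) (Fin n) ℝ) (Ass : Matrix (Fin m) (Fin m) ℝ)
    (b1 : E n) (b2 : E m)
    (UX : Matrix (Fin n) (Fin d) ℝ) (UY : Matrix (Fin m) (Fin r) ℝ)
    (hUX : UXᵀ * UX = 1) (hUY : UYᵀ * UY = 1)
    (xs : E n) (ys : E m)
    (hxs : mv Aff xs + mv Afs ys = b1) (hys : mv Asf xs + mv Ass ys = b2)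
    (xp : E n) (yp : E m)
    (hxp : xp ∈ Set.range (mv UX)) (hyp : yp ∈ Set.range (mv UY))
    (hsolx : mv (UX * UXᵀ) (mv Aff xp + mv Afs yp - b1) = 0)
    (hsoly : mv (UY * UYᵀ) (mv Asf xp + mv Ass yp - b2) = 0)
    (h5 : IsUnit (UYᵀ * Ass * UY)) :
    yp - ys = mv (1 - resolvent UY Ass * Ass) (mv (UY * UYᵀ) ys - ys) -
      mv (resolvent UY Ass * Asf) (xp - xs) := by
  obtain ⟨w, hw⟩ := hyp
  have hdet : IsUnit (UYᵀ * Ass * UY).det := (Matrix.isUnit_iff_isUnit_det _).mp h5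
  have hinv : (UYᵀ * Ass * UY)⁻¹ * (UYᵀ * Ass * UY) = 1 := Matrix.nonsing_inv_mul _ hdet
  -- c5 * Ass * UY = UY
  have hc5UY : resolvent UY Ass * Ass * UY = UY := by
    have : UY * (UYᵀ * Ass * UY)⁻¹ * UYᵀ * Ass * UY
        = UY * ((UYᵀ * Ass * UY)⁻¹ * (UYᵀ * Ass * UY)) := by
      simp only [Matrix.mul_assoc]
    rw [resolvent, this, hinv, Matrix.mul_one]
  -- the residual is annihilated by UYᵀ
  have hb2 : b2 = mv Asf xs + mv Ass ys := hys.symm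
  have hres : mv Asf xp + mv Ass yp - b2
      = mv Asf (xp - xs) + mv Ass (yp - ys) := by
    rw [hb2, mv_sub, mv_sub]; abel
  have hUYt : mv UYᵀ (mv Asf (xp - xs) + mv Ass (yp - ys)) = 0 := by
    have h1 := congrArg (mv UYᵀ) hsoly
    rw [← mv_mul, ← Matrix.mul_assoc, hUY, Matrix.one_mul, mv_zero, hres] at h1
    exact h1
  -- hence c5 annihilates the residual
  have hc5res : mv (resolvent UY Ass) (mv Asf (xp - xs))
      + mv (resolvent UY Ass) (mv Ass (yp - ys)) = 0 := by
    have : mv (resolvent UY Ass) (mv Asf (xp - xs) + mv Ass (yp - ys)) = 0 := by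
      rw [resolvent, mv_mul, hUYt, mv_zero]
    rw [← mv_add, this]
  have hc5Asf : mv (resolvent UY Ass) (mv Asf (xp - xs))
      = - mv (resolvent UY Ass) (mv Ass (yp - ys)) := by
    linear_combination (norm := abel) hc5res
  -- c5 Ass fixes range UY
  have hfix : ∀ z : E r, mv (resolvent UY Ass) (mv Ass (mv UY z)) = mv UY z := by
    intro z
    rw [← mv_mul, ← mv_mul, hc5UY]
  have hPi : mv (UY * UYᵀ) ys = mv UY (mv UYᵀ ys) := mv_mul _ _ _
  have hyp' : mv (resolvent UY Ass) (mv Ass yp) = yp := by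
    rw [← hw, hfix]
  have hPi' : mv (resolvent UY Ass) (mv Ass (mv (UY * UYᵀ) ys)) = mv (UY * UYᵀ) ys := by
    rw [hPi, hfix]
  rw [mv_matsub, mv_mul, mv_mul, mv_one,
      mv_sub Ass, mv_sub (resolvent UY Ass), hfix,
      mv_mul (resolvent UY Ass) Asf, hc5Asf,
      mv_sub Ass, mv_sub (resolvent UY Ass), hyp']
  abel

end TTSA
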